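/- For every integer k ≥ 1, the formal power series x^k − z·y^k is irreducible in the ring ℂ⟦x, y, z⟧ of formal power series in three variables over ℂ. -/

import Mathlib

open MvPowerSeries Finsupp

namespace IrredXZYAux

/-- The weight function: `w(d) = 2 d₀ + d₁ + k d₂`. -/
def w (k : ℕ) (d : Fin 3 →₀ ℕ) : ℕ := 2 * d 0 + d 1 + k * d 2

lemma w_add (k : ℕ) (a b : Fin 3 →₀ ℕ) : w k (a + b) = w k a + w k b := by
  simp only [w, Finsupp.add_apply]; ring

lemma w_zero (k : ℕ) : w k 0 = 0 := by simp [w]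

lemma w_eq_zero {k : ℕ} (hk : 1 ≤ k) {d : Fin 3 →₀ ℕ} (h : w k d = 0) : d = 0 := by
  simp only [w] at h
  have h2 : d 2 = 0 := by
    rcases Nat.mul_eq_zero.mp (by omega : k * d 2 = 0) with h' | h'
    · omega
    · exact h'
  ext i
  fin_cases i <;> simp_all

/-- the finset of exponents of weight `n` -/
noncomputable def T (k n : ℕ) : Finset (Fin 3 →₀ ℕ) :=
  (Finset.Iic (Finsupp.equivFunOnFinite.symm fun _ => n)).filter
    (fun d => w k d = n)

lemma mem_T {k : ℕ} (hk : 1 ≤ k) {n : ℕ} {d : Fin 3 →₀ ℕ} :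
    d ∈ T k n ↔ w k d = n := by
  constructor
  · intro hd; exact (Finset.mem_filter.mp hd).2
  · intro hd
    refine Finset.mem_filter.mpr ⟨Finset.mem_Iic.mpr ?_, hd⟩
    have hkd : d 2 ≤ k * d 2 := Nat.le_mul_of_pos_left _ (by omega)
    simp only [w] at hd
    intro i
    fin_cases i
    · show d 0 ≤ n; omega
    · show d 1 ≤ n; omega
    · show d 2 ≤ n; omega

/-- the initial (lowest weight) part of a power series, as a polynomial -/
noncomputable def initp (k n : ℕ) (f : MvPowerSeries (Fin 3) ℂ) : MvPolynomial (Fin 3) ℂ :=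
  ∑ d ∈ T k n, MvPolynomial.monomial d (MvPowerSeries.coeff d f)

lemma coeff_initp {k : ℕ} (hk : 1 ≤ k) (n : ℕ) (f : MvPowerSeries (Fin 3) ℂ)
    (e : Fin 3 →₀ ℕ) :
    MvPolynomial.coeff e (initp k n f) =
      if w k e = n then MvPowerSeries.coeff e f else 0 := by
  classical
  rw [initp, MvPolynomial.coeff_sum]
  simp only [MvPolynomial.coeff_monomial]
  rw [Finset.sum_ite_eq' (T k n) e (fun d => MvPowerSeries.coeff d f)]
  congr 1
  simp [mem_T hk, eq_iff_iff]

lemma coeff_initp_mul_of_w_eq {k : ℕ} (hk : 1 ≤ k) {g h : MvPowerSeries (Fin 3) ℂ}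
    {a b : ℕ} (hg : ∀ d, w k d < a → MvPowerSeries.coeff d g = 0)
    (hh : ∀ d, w k d < b → MvPowerSeries.coeff d h = 0)
    {e : Fin 3 →₀ ℕ} (he : w k e = a + b) :
    MvPolynomial.coeff e (initp k a g * initp k b h) = MvPowerSeries.coeff e (g * h) := by
  classical
  rw [MvPolynomial.coeff_mul, MvPowerSeries.coeff_mul]
  refine Finset.sum_congr rfl fun p hp => ?_
  have hpe : p.1 + p.2 = e := Finset.HasAntidiagonal.mem_antidiagonal.mp hp
  have hw : w k p.1 + w k p.2 = a + b := by rw [← w_add, hpe, he]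
  rw [coeff_initp hk, coeff_initp hk]
  rcases lt_trichotomy (w k p.1) a with h1 | h1 | h1
  · rw [if_neg (by omega), hg p.1 h1, zero_mul, zero_mul]
  · rw [if_pos h1, if_pos (by omega)]
  · rw [if_neg (by omega), hh p.2 (by omega), mul_zero, zero_mul]

lemma coeff_initp_mul_of_w_ne {k : ℕ} (hk : 1 ≤ k) (g h : MvPowerSeries (Fin 3) ℂ)
    {a b : ℕ} {e : Fin 3 →₀ ℕ} (he : w k e ≠ a + b) :
    MvPolynomial.coeff e (initp k a g * initp k b h) = 0 := by
  classical
  rw [MvPolynomial.coeff_mul]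
  refine Finset.sum_eq_zero fun p hp => ?_
  have hpe : p.1 + p.2 = e := Finset.HasAntidiagonal.mem_antidiagonal.mp hp
  have hw : w k p.1 + w k p.2 = w k e := by rw [← w_add, hpe]
  rw [coeff_initp hk, coeff_initp hk]
  by_cases h2 : w k p.2 = b
  · rw [if_neg (by omega : ¬ w k p.1 = a), zero_mul]
  · rw [if_neg h2, mul_zero]

lemma coeff_mul_of_w_lt {k : ℕ} (hk : 1 ≤ k) {g h : MvPowerSeries (Fin 3) ℂ}
    {a b : ℕ} (hg : ∀ d, w k d < a → MvPowerSeries.coeff d g = 0)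
    (hh : ∀ d, w k d < b → MvPowerSeries.coeff d h = 0)
    {e : Fin 3 →₀ ℕ} (he : w k e < a + b) :
    MvPowerSeries.coeff e (g * h) = 0 := by
  classical
  rw [MvPowerSeries.coeff_mul]
  refine Finset.sum_eq_zero fun p hp => ?_
  have hpe : p.1 + p.2 = e := Finset.HasAntidiagonal.mem_antidiagonal.mp hp
  have hw : w k p.1 + w k p.2 = w k e := by rw [← w_add, hpe]
  rcases lt_or_ge (w k p.1) a with h1 | h1
  · rw [hg p.1 h1, zero_mul]
  · rw [hh p.2 (by omega), mul_zero]

/-- the two exponents occurring in `x^k - z y^k` -/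
noncomputable def e₁ (k : ℕ) : Fin 3 →₀ ℕ := Finsupp.single 0 k
noncomputable def e₂ (k : ℕ) : Fin 3 →₀ ℕ := Finsupp.single 2 1 + Finsupp.single 1 k

lemma w_e₁ (k : ℕ) : w k (e₁ k) = 2 * k := by
  simp [w, e₁, Finsupp.single_apply]

lemma w_e₂ (k : ℕ) : w k (e₂ k) = 2 * k := by
  simp [w, e₂, Finsupp.single_apply]
  omega

lemma e₁_ne_e₂ (k : ℕ) : e₁ k ≠ e₂ k := by
  intro hcon
  have := congrArg (fun d : Fin 3 →₀ ℕ => d 2) hcon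
  simp [e₁, e₂, Finsupp.single_apply] at this

lemma e₁_ne_zero {k : ℕ} (hk : 1 ≤ k) : e₁ k ≠ 0 := by
  intro hcon
  have := congrArg (fun d : Fin 3 →₀ ℕ => d 0) hcon
  simp [e₁, Finsupp.single_apply] at this
  omega

lemma e₂_ne_zero (k : ℕ) : e₂ k ≠ 0 := by
  intro hcon
  have := congrArg (fun d : Fin 3 →₀ ℕ => d 2) hcon
  simp [e₂, Finsupp.single_apply] at this

lemma coeff_f (k : ℕ) (d : Fin 3 →₀ ℕ) :
    MvPowerSeries.coeff d
      ((MvPowerSeries.X 0 : MvPowerSeries (Fin 3) ℂ) ^ k -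
        MvPowerSeries.X 2 * MvPowerSeries.X 1 ^ k) =
      (if d = e₁ k then 1 else 0) - (if d = e₂ k then 1 else 0) := by
  classical
  have hX2 : (MvPowerSeries.X 2 : MvPowerSeries (Fin 3) ℂ) * MvPowerSeries.X 1 ^ k =
      MvPowerSeries.monomial (e₂ k) 1 := by
    rw [show (MvPowerSeries.X 2 : MvPowerSeries (Fin 3) ℂ) = MvPowerSeries.X 2 ^ 1 by ring,
      MvPowerSeries.X_pow_eq, MvPowerSeries.X_pow_eq, MvPowerSeries.monomial_mul_monomial,
      one_mul, e₂]
  rw [map_sub, hX2, MvPowerSeries.coeff_monomial, MvPowerSeries.coeff_X_pow, e₁]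

lemma coeff_Qpoly (k : ℕ) (e : Fin 3 →₀ ℕ) :
    MvPolynomial.coeff e
      ((MvPolynomial.X 0 : MvPolynomial (Fin 3) ℂ) ^ k -
        MvPolynomial.X 2 * MvPolynomial.X 1 ^ k) =
      (if e = e₁ k then 1 else 0) - (if e = e₂ k then 1 else 0) := by
  classical
  have hX2 : (MvPolynomial.X 2 : MvPolynomial (Fin 3) ℂ) * MvPolynomial.X 1 ^ k =
      MvPolynomial.monomial (e₂ k) 1 := by
    rw [show (MvPolynomial.X 2 : MvPolynomial (Fin 3) ℂ) = MvPolynomial.X 2 ^ 1 by ring,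
      MvPolynomial.X_pow_eq_monomial, MvPolynomial.X_pow_eq_monomial,
      MvPolynomial.monomial_mul, one_mul, e₂]
  rw [MvPolynomial.coeff_sub, hX2, MvPolynomial.X_pow_eq_monomial,
    MvPolynomial.coeff_monomial, MvPolynomial.coeff_monomial, e₁]
  simp [eq_comm]

lemma lin_coeff1 (α β : MvPolynomial (Fin 2) ℂ) :
    (Polynomial.C α * Polynomial.X + Polynomial.C β).coeff 1 = α := by simp

lemma lin_coeff0 (α β : MvPolynomial (Fin 2) ℂ) :
    (Polynomial.C α * Polynomial.X + Polynomial.C β).coeff 0 = β := by simp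

/-- if `C c` divides (as a factor in the displayed way) the linear polynomial corresponding to
`x^k - z y^k`, then `c` is a unit. -/
lemma const_factor {k : ℕ} (hk : 1 ≤ k) {c : MvPolynomial (Fin 2) ℂ}
    {v : Polynomial (MvPolynomial (Fin 2) ℂ)}
    (h : Polynomial.C c * v =
      Polynomial.C (-(MvPolynomial.X 0 ^ k)) * Polynomial.X +
        Polynomial.C (MvPolynomial.X 1 ^ k)) : IsUnit c := by
  classical
  have h1 : c * v.coeff 1 = -(MvPolynomial.X 0 ^ k) := by
    have := congrArg (fun p => Polynomial.coeff p 1) h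
    simpa only [Polynomial.coeff_C_mul, lin_coeff1] using this
  have h0 : c * v.coeff 0 = MvPolynomial.X 1 ^ k := by
    have := congrArg (fun p => Polynomial.coeff p 0) h
    simpa only [Polynomial.coeff_C_mul, lin_coeff0] using this
  have hdx : c ∣ (MvPolynomial.X 0 : MvPolynomial (Fin 2) ℂ) ^ k :=
    ⟨-(v.coeff 1), by linear_combination h1⟩
  have hdy : c ∣ (MvPolynomial.X 1 : MvPolynomial (Fin 2) ℂ) ^ k := ⟨v.coeff 0, h0.symm⟩
  set E2 := MvPolynomial.finSuccEquiv ℂ 1 with hE2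
  have hdx' : E2 c ∣ Polynomial.X ^ k := by
    have := map_dvd E2 hdx
    rwa [map_pow, MvPolynomial.finSuccEquiv_X_zero] at this
  have hdy' : E2 c ∣ Polynomial.C ((MvPolynomial.X 0 : MvPolynomial (Fin 1) ℂ) ^ k) := by
    have := map_dvd E2 hdy
    rwa [map_pow, show (1 : Fin 2) = (0 : Fin 1).succ from rfl,
      MvPolynomial.finSuccEquiv_X_succ, ← map_pow] at this
  have hCne : (Polynomial.C ((MvPolynomial.X 0 : MvPolynomial (Fin 1) ℂ) ^ k)) ≠ 0 :=
    Polynomial.C_ne_zero.mpr (pow_ne_zero _ (MvPolynomial.X_ne_zero _))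
  have hdeg : (E2 c).natDegree = 0 := by
    have := Polynomial.natDegree_le_of_dvd hdy' hCne
    simpa using this
  obtain ⟨e, he⟩ : ∃ e, Polynomial.C e = E2 c := ⟨_, (Polynomial.eq_C_of_natDegree_eq_zero hdeg).symm⟩
  obtain ⟨t, ht⟩ := hdx'
  have hcoeffk : (1 : MvPolynomial (Fin 1) ℂ) = e * t.coeff k := by
    have := congrArg (fun p => Polynomial.coeff p k) ht
    simpa [← he, Polynomial.coeff_C_mul, Polynomial.coeff_X_pow] using this
  have hue : IsUnit e := IsUnit.of_mul_eq_one _ hcoeffk.symm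
  have : IsUnit (E2 c) := by rw [← he]; exact hue.map Polynomial.C
  have := this.map E2.symm
  simpa using this

lemma poly_endgame {k : ℕ} (hk : 1 ≤ k) {P Q : MvPolynomial (Fin 3) ℂ}
    (hP : ¬IsUnit P) (hQ : ¬IsUnit Q)
    (hPQ : P * Q = (MvPolynomial.X 0 : MvPolynomial (Fin 3) ℂ) ^ k -
      MvPolynomial.X 2 * MvPolynomial.X 1 ^ k) : False := by
  classical
  set E := (MvPolynomial.renameEquiv ℂ (Equiv.swap (0 : Fin 3) 2)).trans
    (MvPolynomial.finSuccEquiv ℂ 2) with hEdef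
  have hEX0 : E (MvPolynomial.X 0) = Polynomial.C (MvPolynomial.X 1) := by
    simp only [hEdef, AlgEquiv.trans_apply, MvPolynomial.renameEquiv_apply,
      MvPolynomial.rename_X, Equiv.swap_apply_left]
    rw [show (2 : Fin 3) = (1 : Fin 2).succ from rfl, MvPolynomial.finSuccEquiv_X_succ]
  have hEX1 : E (MvPolynomial.X 1) = Polynomial.C (MvPolynomial.X 0) := by
    simp only [hEdef, AlgEquiv.trans_apply, MvPolynomial.renameEquiv_apply,
      MvPolynomial.rename_X]
    rw [show (Equiv.swap (0 : Fin 3) 2) 1 = (0 : Fin 2).succ by decide,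
      MvPolynomial.finSuccEquiv_X_succ]
  have hEX2 : E (MvPolynomial.X 2) = Polynomial.X := by
    simp only [hEdef, AlgEquiv.trans_apply, MvPolynomial.renameEquiv_apply,
      MvPolynomial.rename_X, Equiv.swap_apply_right]
    exact MvPolynomial.finSuccEquiv_X_zero
  have hE : E P * E Q =
      Polynomial.C (-(MvPolynomial.X 0 ^ k)) * Polynomial.X +
        Polynomial.C (MvPolynomial.X 1 ^ k) := by
    rw [← map_mul, hPQ, map_sub, map_mul, map_pow, map_pow, hEX0, hEX1, hEX2,
      ← map_pow, ← map_pow, map_neg]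
    ring
  have hαne : -((MvPolynomial.X 0 : MvPolynomial (Fin 2) ℂ) ^ k) ≠ 0 :=
    neg_ne_zero.mpr (pow_ne_zero _ (MvPolynomial.X_ne_zero _))
  have hRHSne : Polynomial.C (-(MvPolynomial.X 0 ^ k)) * Polynomial.X +
      Polynomial.C ((MvPolynomial.X 1 : MvPolynomial (Fin 2) ℂ) ^ k) ≠ 0 := by
    intro hcon
    have := congrArg (fun p => Polynomial.coeff p 1) hcon
    simp only [lin_coeff1, Polynomial.coeff_zero] at this
    exact hαne this
  have hEP : E P ≠ 0 := by
    intro hcon; rw [hcon, zero_mul] at hE; exact hRHSne hE.symm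
  have hEQ : E Q ≠ 0 := by
    intro hcon; rw [hcon, mul_zero] at hE; exact hRHSne hE.symm
  have hdeg : (E P).natDegree + (E Q).natDegree = 1 := by
    rw [← Polynomial.natDegree_mul hEP hEQ, hE, Polynomial.natDegree_linear hαne]
  rcases Nat.eq_zero_or_pos (E P).natDegree with hdP | hdP
  · obtain ⟨c, hc⟩ : ∃ c, Polynomial.C c = E P :=
      ⟨_, (Polynomial.eq_C_of_natDegree_eq_zero hdP).symm⟩
    have hcu : IsUnit c := const_factor hk (v := E Q) (by rw [hc, hE])
    have : IsUnit (E P) := by rw [← hc]; exact hcu.map Polynomial.C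
    have := this.map E.symm
    simp at this
    exact hP this
  · have hdQ : (E Q).natDegree = 0 := by omega
    obtain ⟨c, hc⟩ : ∃ c, Polynomial.C c = E Q :=
      ⟨_, (Polynomial.eq_C_of_natDegree_eq_zero hdQ).symm⟩
    have hcu : IsUnit c := const_factor hk (v := E P) (by rw [hc, mul_comm, hE])
    have : IsUnit (E Q) := by rw [← hc]; exact hcu.map Polynomial.C
    have := this.map E.symm
    simp at this
    exact hQ this

end IrredXZYAux

/-- For every integer `k ≥ 1`, the formal power series `x^k - z * y^k` is irreducible in
`ℂ⟦x, y, z⟧`, the ring of formal power series in three variables over `ℂ` (here the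
variables `x`, `y`, `z` are `X 0`, `X 1`, `X 2` in `MvPowerSeries (Fin 3) ℂ`). -/
theorem irreducible_X_pow_sub_Z_mul_Y_pow (k : ℕ) (hk : 1 ≤ k) :
    Irreducible ((MvPowerSeries.X 0 : MvPowerSeries (Fin 3) ℂ) ^ k -
      MvPowerSeries.X 2 * MvPowerSeries.X 1 ^ k) := by
  classical
  open IrredXZYAux in
  have hfne : ((MvPowerSeries.X 0 : MvPowerSeries (Fin 3) ℂ) ^ k -
      MvPowerSeries.X 2 * MvPowerSeries.X 1 ^ k) ≠ 0 := by
    intro hcon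
    have h1 := IrredXZYAux.coeff_f k (IrredXZYAux.e₁ k)
    rw [hcon, map_zero, if_pos rfl, if_neg (IrredXZYAux.e₁_ne_e₂ k), sub_zero] at h1
    exact one_ne_zero h1.symm
  constructor
  · rw [MvPowerSeries.isUnit_iff_constantCoeff]
    have h0 : MvPowerSeries.constantCoeff
        ((MvPowerSeries.X 0 : MvPowerSeries (Fin 3) ℂ) ^ k -
          MvPowerSeries.X 2 * MvPowerSeries.X 1 ^ k) = 0 := by
      rw [← MvPowerSeries.coeff_zero_eq_constantCoeff_apply, IrredXZYAux.coeff_f k,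
        if_neg (fun hcon => IrredXZYAux.e₁_ne_zero hk hcon.symm),
        if_neg (fun hcon => IrredXZYAux.e₂_ne_zero k hcon.symm)]
      ring
    rw [h0]
    exact not_isUnit_zero
  · intro g h hgh
    by_contra hcon
    rw [not_or] at hcon
    obtain ⟨hgu, hhu⟩ := hcon
    have hg0 : MvPowerSeries.constantCoeff g = 0 := by
      by_contra hne
      exact hgu (MvPowerSeries.isUnit_iff_constantCoeff.mpr (isUnit_iff_ne_zero.mpr hne))
    have hh0 : MvPowerSeries.constantCoeff h = 0 := by
      by_contra hne
      exact hhu (MvPowerSeries.isUnit_iff_constantCoeff.mpr (isUnit_iff_ne_zero.mpr hne))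
    have hgne : g ≠ 0 := by
      intro h0; apply hfne; rw [hgh, h0, zero_mul]
    have hhne : h ≠ 0 := by
      intro h0; apply hfne; rw [hgh, h0, mul_zero]
    have hgex : ∃ n, ∃ d, IrredXZYAux.w k d = n ∧ MvPowerSeries.coeff d g ≠ 0 := by
      by_contra hcon2
      push_neg at hcon2
      apply hgne
      apply MvPowerSeries.ext
      intro d
      simpa using hcon2 (IrredXZYAux.w k d) d rfl
    have hhex : ∃ n, ∃ d, IrredXZYAux.w k d = n ∧ MvPowerSeries.coeff d h ≠ 0 := by
      by_contra hcon2
      push_neg at hcon2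
      apply hhne
      apply MvPowerSeries.ext
      intro d
      simpa using hcon2 (IrredXZYAux.w k d) d rfl
    set a := Nat.find hgex with ha
    set b := Nat.find hhex with hb
    obtain ⟨da, hda, hcda⟩ := Nat.find_spec hgex
    obtain ⟨db, hdb, hcdb⟩ := Nat.find_spec hhex
    have hga : ∀ d, IrredXZYAux.w k d < a → MvPowerSeries.coeff d g = 0 := by
      intro d hd
      by_contra hc
      exact Nat.find_min hgex hd ⟨d, rfl, hc⟩
    have hhb : ∀ d, IrredXZYAux.w k d < b → MvPowerSeries.coeff d h = 0 := by
      intro d hd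
      by_contra hc
      exact Nat.find_min hhex hd ⟨d, rfl, hc⟩
    have ha1 : a ≠ 0 := by
      intro h0
      rw [← ha, h0] at hda
      apply hcda
      rw [IrredXZYAux.w_eq_zero hk hda, MvPowerSeries.coeff_zero_eq_constantCoeff_apply, hg0]
    have hb1 : b ≠ 0 := by
      intro h0
      rw [← hb, h0] at hdb
      apply hcdb
      rw [IrredXZYAux.w_eq_zero hk hdb, MvPowerSeries.coeff_zero_eq_constantCoeff_apply, hh0]
    set Pg := IrredXZYAux.initp k a g with hPg
    set Ph := IrredXZYAux.initp k b h with hPh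
    have hPgne : Pg ≠ 0 := MvPolynomial.ne_zero_iff.mpr
      ⟨da, by rw [hPg, IrredXZYAux.coeff_initp hk, if_pos hda]; exact hcda⟩
    have hPhne : Ph ≠ 0 := MvPolynomial.ne_zero_iff.mpr
      ⟨db, by rw [hPh, IrredXZYAux.coeff_initp hk, if_pos hdb]; exact hcdb⟩
    obtain ⟨e0, he0⟩ := MvPolynomial.ne_zero_iff.mp (mul_ne_zero hPgne hPhne)
    have hwe0 : IrredXZYAux.w k e0 = a + b := by
      by_contra hne
      exact he0 (IrredXZYAux.coeff_initp_mul_of_w_ne hk g h hne)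
    have hfe0 : MvPowerSeries.coeff e0
        ((MvPowerSeries.X 0 : MvPowerSeries (Fin 3) ℂ) ^ k -
          MvPowerSeries.X 2 * MvPowerSeries.X 1 ^ k) ≠ 0 := by
      rw [hgh, ← IrredXZYAux.coeff_initp_mul_of_w_eq hk hga hhb hwe0]
      exact he0
    have hw2k : IrredXZYAux.w k e0 = 2 * k := by
      rw [IrredXZYAux.coeff_f k] at hfe0
      by_cases h1 : e0 = IrredXZYAux.e₁ k
      · rw [h1, IrredXZYAux.w_e₁]
      · by_cases h2 : e0 = IrredXZYAux.e₂ k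
        · rw [h2, IrredXZYAux.w_e₂]
        · rw [if_neg h1, if_neg h2, sub_zero] at hfe0
          exact absurd rfl hfe0
    have hab : a + b = 2 * k := by omega
    have hPQ : Pg * Ph = (MvPolynomial.X 0 : MvPolynomial (Fin 3) ℂ) ^ k -
        MvPolynomial.X 2 * MvPolynomial.X 1 ^ k := by
      apply MvPolynomial.ext
      intro e
      rw [IrredXZYAux.coeff_Qpoly]
      by_cases hwe : IrredXZYAux.w k e = 2 * k
      · rw [hPg, hPh, IrredXZYAux.coeff_initp_mul_of_w_eq hk hga hhb (by omega), ← hgh,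
          IrredXZYAux.coeff_f k]
      · rw [hPg, hPh, IrredXZYAux.coeff_initp_mul_of_w_ne hk g h (by omega),
          if_neg (fun hcon => hwe (by rw [hcon, IrredXZYAux.w_e₁])),
          if_neg (fun hcon => hwe (by rw [hcon, IrredXZYAux.w_e₂]))]
        ring
    have hPgu : ¬IsUnit Pg := by
      intro hu
      have hmap := hu.map (MvPolynomial.constantCoeff : MvPolynomial (Fin 3) ℂ →+* ℂ)
      have hc0 : MvPolynomial.constantCoeff Pg = 0 := by
        show MvPolynomial.coeff 0 Pg = 0
        rw [hPg, IrredXZYAux.coeff_initp hk,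
          if_neg (by rw [IrredXZYAux.w_zero]; omega)]
      rw [hc0] at hmap
      exact not_isUnit_zero hmap
    have hPhu : ¬IsUnit Ph := by
      intro hu
      have hmap := hu.map (MvPolynomial.constantCoeff : MvPolynomial (Fin 3) ℂ →+* ℂ)
      have hc0 : MvPolynomial.constantCoeff Ph = 0 := by
        show MvPolynomial.coeff 0 Ph = 0
        rw [hPh, IrredXZYAux.coeff_initp hk,
          if_neg (by rw [IrredXZYAux.w_zero]; omega)]
      rw [hc0] at hmap
      exact not_isUnit_zero hmap
    exact IrredXZYAux.poly_endgame hk hPgu hPhu hPQ
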